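/- The number of symmetric lattice paths p = (p_0,...,p_g) (p_i = p_{g−i}) with p_0 = p_g = 1, p_i ≥ 1, |p_i − p_{i−1}| = 1, and g = 2d−2, where additionally p_{g/2} = m, equals (m/d)·C(d, (d−m)/2), for each m with 1 ≤ m ≤ d and m ≡ d (mod 2). -/

import Mathlib

/-- A lattice path `p = (p_0, ..., p_g)` of integers with `p_0 = p_g = 1`,
`p_i ≥ 1` for all `i`, and `|p_i - p_{i-1}| = 1` for `i ∈ {1,...,g}`. -/
def IsLatticePath (g : ℕ) (p : Fin (g + 1) → ℤ) : Prop :=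
  p 0 = 1 ∧ p (Fin.last g) = 1 ∧ (∀ i, 1 ≤ p i) ∧
    ∀ i : Fin g, |p i.succ - p i.castSucc| = 1

def pathCount : ℕ → ℤ → ℕ
  | 0, m => if m = 1 then 1 else 0
  | (n+1), m => if 1 ≤ m then pathCount n (m-1) + pathCount n (m+1) else 0

lemma pathCount_nonpos : ∀ (n : ℕ) (m : ℤ), m ≤ 0 → pathCount n m = 0
  | 0, m, h => by simp [pathCount]; omega
  | (n+1), m, h => by simp [pathCount]; omega

lemma pathCount_big : ∀ (n : ℕ) (m : ℤ), (n : ℤ) + 1 < m → pathCount n m = 0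
  | 0, m, h => by simp [pathCount]; omega
  | (n+1), m, h => by
    simp only [pathCount]
    rcases le_or_gt 1 m with hm | hm
    · rw [if_pos hm, pathCount_big n (m-1) (by push_cast at h ⊢; omega),
        pathCount_big n (m+1) (by push_cast at h ⊢; omega)]
    · rw [if_neg (by omega)]

lemma pathCount_top : ∀ (n : ℕ), pathCount n ((n : ℤ) + 1) = 1
  | 0 => by simp [pathCount]
  | (n+1) => by
    have h3 := pathCount_top n
    have h2 := pathCount_big n ((n:ℤ)+1+1+1) (by omega)
    have key : pathCount (n+1) ((n:ℤ)+1+1) = pathCount n ((n:ℤ)+1) + pathCount n ((n:ℤ)+1+1+1) := by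
      simp only [pathCount, if_pos (by omega : (1:ℤ) ≤ (n:ℤ)+1+1)]
      norm_num
    have hc : ((n+1 : ℕ) : ℤ) + 1 = (n:ℤ)+1+1 := by push_cast; ring
    rw [hc, key, h3, h2]

lemma pathCount_key : ∀ (n m k : ℕ), 1 ≤ m → 1 ≤ k → n + 1 = m + 2*k →
    pathCount n (m : ℤ) + n.choose (k-1) = n.choose k
  | 0, m, k, hm, hk, h => by omega
  | (n+1), m, k, hm, hk, h => by
    have hrw : pathCount (n+1) (m : ℤ) = pathCount n ((m:ℤ)-1) + pathCount n ((m:ℤ)+1) := by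
      simp only [pathCount, if_pos (by exact_mod_cast hm : (1:ℤ) ≤ (m:ℤ))]
    rw [hrw]
    have hcast1 : ((m:ℤ) - 1) = ((m - 1 : ℕ) : ℤ) := by push_cast [hm]; ring
    have hcast2 : ((m:ℤ) + 1) = ((m + 1 : ℕ) : ℤ) := by push_cast; ring
    rcases Nat.eq_or_lt_of_le hm with hm1 | hm2
    · -- m = 1
      rcases hm1
      have h0 : pathCount n ((0:ℤ)) = 0 := pathCount_nonpos n 0 le_rfl
      rw [show ((1:ℕ):ℤ) - 1 = 0 from by norm_num, show ((1:ℕ):ℤ) + 1 = ((2:ℕ):ℤ) from by norm_num, h0]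
      rcases Nat.eq_or_lt_of_le hk with hk1 | hk2
      · -- k = 1
        rcases hk1
        have hn : n = 1 := by omega
        subst hn
        norm_num [pathCount]
      · -- k ≥ 2
        have ih := pathCount_key n 2 (k-1) (by omega) (by omega) (by omega)
        have hp1 : (n+1).choose ((k-2)+1) = n.choose (k-2) + n.choose ((k-2)+1) :=
          Nat.choose_succ_succ n (k-2)
        have hp2 : (n+1).choose ((k-1)+1) = n.choose (k-1) + n.choose ((k-1)+1) :=
          Nat.choose_succ_succ n (k-1)
        have hsym : n.choose (n - k) = n.choose k := Nat.choose_symm (by omega)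
        have hnk : n - k = k - 1 := by omega
        rw [hnk] at hsym
        have e1 : (k-2)+1 = k-1 := by omega
        have e2 : (k-1)+1 = k := by omega
        rw [e1] at hp1; rw [e2] at hp2
        have e3 : (k-1)-1 = k-2 := by omega
        rw [e3] at ih
        omega
    · -- m ≥ 2
      have ih1 := pathCount_key n (m-1) k (by omega) hk (by omega)
      rw [hcast1, hcast2]
      rcases Nat.eq_or_lt_of_le hk with hk1 | hk2
      · -- k = 1
        rcases hk1
        have hmn : m = n := by omega
        have htop : pathCount n ((m+1 : ℕ) : ℤ) = 1 := by
          subst hmn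
          have := pathCount_top m
          rwa [show ((m:ℤ)+1) = ((m+1:ℕ):ℤ) by push_cast; ring] at this
        simp only [Nat.choose_one_right, Nat.choose_zero_right,
          show (1:ℕ)-1 = 0 from rfl] at ih1 ⊢
        omega
      · -- k ≥ 2
        have ih2 := pathCount_key n (m+1) (k-1) (by omega) (by omega) (by omega)
        have hp1 : (n+1).choose ((k-2)+1) = n.choose (k-2) + n.choose ((k-2)+1) :=
          Nat.choose_succ_succ n (k-2)
        have hp2 : (n+1).choose ((k-1)+1) = n.choose (k-1) + n.choose ((k-1)+1) :=
          Nat.choose_succ_succ n (k-1)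
        have e1 : (k-2)+1 = k-1 := by omega
        have e2 : (k-1)+1 = k := by omega
        rw [e1] at hp1; rw [e2] at hp2
        have e3 : (k-1)-1 = k-2 := by omega
        rw [e3] at ih2
        omega
def PathSet (n : ℕ) (m : ℤ) : Set (Fin (n+1) → ℤ) :=
  {p | p 0 = 1 ∧ (∀ i, 1 ≤ p i) ∧ (∀ i : Fin n, |p i.succ - p i.castSucc| = 1) ∧
    p (Fin.last n) = m}

lemma pathSet_bound {n : ℕ} {m : ℤ} {p : Fin (n+1) → ℤ} (hp : p ∈ PathSet n m) :
    ∀ i : Fin (n+1), p i ≤ 1 + i.val := by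
  obtain ⟨h0, -, hstep, -⟩ := hp
  intro i
  induction i using Fin.induction with
  | zero => simp [h0]
  | succ j ih =>
    rcases (abs_eq (by norm_num : (0:ℤ) ≤ 1)).mp (hstep j) with h | h <;>
      · simp only [Fin.val_succ, Fin.coe_castSucc] at ih ⊢
        push_cast at ih ⊢
        omega

lemma pathSet_finite (n : ℕ) (m : ℤ) : (PathSet n m).Finite := by
  apply Set.Finite.subset (Set.Finite.pi (fun i : Fin (n+1) => Set.finite_Icc (1:ℤ) (n+1)))
  intro p hp
  simp only [Set.mem_pi, Set.mem_univ, Set.mem_Icc, forall_true_left]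
  intro i
  refine ⟨hp.2.1 i, le_trans (pathSet_bound hp i) ?_⟩
  have := i.is_le
  push_cast
  omega

lemma pathSet_ncard (n : ℕ) : ∀ m : ℤ, (PathSet n m).ncard = pathCount n m := by
  induction n with
  | zero =>
    intro m
    by_cases hm : m = 1
    · subst hm
      have : PathSet 0 1 = {fun _ : Fin 1 => (1:ℤ)} := by
        ext p
        constructor
        · rintro ⟨h0, -, -, -⟩
          funext i
          have : i = 0 := Fin.ext (by omega)
          rw [this, h0]
        · rintro rfl
          exact ⟨rfl, fun i => le_refl 1, fun i => i.elim0, rfl⟩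
      rw [this, Set.ncard_singleton]
      simp [pathCount]
    · have : PathSet 0 m = ∅ := by
        ext p
        simp only [Set.mem_empty_iff_false, iff_false]
        rintro ⟨h0, -, -, hlast⟩
        exact hm (by rw [← hlast, show Fin.last 0 = 0 from rfl, h0])
      rw [this, Set.ncard_empty]
      simp [pathCount, hm]
  | succ n ih =>
    intro m
    by_cases hm : 1 ≤ m
    · set r : (Fin (n+2) → ℤ) → (Fin (n+1) → ℤ) := fun p => p ∘ Fin.castSucc with hr
      have hinj : Set.InjOn r (PathSet (n+1) m) := by
        intro p hp p' hp' h
        funext i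
        induction i using Fin.lastCases with
        | last => rw [hp.2.2.2, hp'.2.2.2]
        | cast j => exact congrFun h j
      have himg : r '' PathSet (n+1) m = PathSet n (m-1) ∪ PathSet n (m+1) := by
        ext q
        constructor
        · rintro ⟨p, ⟨h0, hge, hstep, hlast⟩, rfl⟩
          have hcongr : ∀ a b : Fin (n+2), a.val = b.val → p a = p b :=
            fun a b hab => congrArg p (Fin.ext hab)
          have hq0 : (p ∘ Fin.castSucc) 0 = 1 := by
            rw [Function.comp_apply, Fin.castSucc_zero, h0]
          have hqge : ∀ i : Fin (n+1), 1 ≤ (p ∘ Fin.castSucc) i := fun i => hge _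
          have hqstep : ∀ i : Fin n,
              |(p ∘ Fin.castSucc) i.succ - (p ∘ Fin.castSucc) i.castSucc| = 1 := by
            intro i
            have e1 : (p ∘ Fin.castSucc) i.succ = p (i.castSucc : Fin (n+1)).succ :=
              hcongr _ _ (by simp)
            have e2 : (p ∘ Fin.castSucc) i.castSucc = p (i.castSucc : Fin (n+1)).castSucc :=
              hcongr _ _ (by simp)
            rw [e1, e2]
            exact hstep i.castSucc
          have hlaststep := hstep (Fin.last n)
          rw [Fin.succ_last, hlast] at hlaststep
          have : p (Fin.last n).castSucc = m - 1 ∨ p (Fin.last n).castSucc = m + 1 := by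
            rcases (abs_eq (by norm_num : (0:ℤ) ≤ 1)).mp hlaststep with h | h
            · left; omega
            · right; omega
          have hql : (p ∘ Fin.castSucc) (Fin.last n) = p (Fin.last n).castSucc := rfl
          rcases this with h | h
          · exact Or.inl ⟨hq0, hqge, hqstep, h⟩
          · exact Or.inr ⟨hq0, hqge, hqstep, h⟩
        · rintro (⟨h0, hge, hstep, hlast⟩ | ⟨h0, hge, hstep, hlast⟩) <;>
          · refine ⟨Fin.snoc q m, ?_, ?_⟩
            · refine ⟨?_, ?_, ?_, ?_⟩
              · rw [show (0 : Fin (n+2)) = Fin.castSucc 0 by simp, Fin.snoc_castSucc]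
                exact h0
              · intro i
                induction i using Fin.lastCases with
                | last => rw [Fin.snoc_last]; omega
                | cast j => rw [Fin.snoc_castSucc]; exact hge j
              · intro i
                induction i using Fin.lastCases with
                | last =>
                  rw [Fin.succ_last, Fin.snoc_last,
                    show (Fin.last n).castSucc = Fin.castSucc (Fin.last n) from rfl,
                    Fin.snoc_castSucc, hlast]
                  simp [abs_sub_comm]
                | cast j =>
                  have e1 : (Fin.castSucc j).succ = Fin.castSucc j.succ := by
                    apply Fin.ext; simp
                  have e2 : (Fin.castSucc j).castSucc = Fin.castSucc j.castSucc := by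
                    apply Fin.ext; simp
                  rw [e1, e2, Fin.snoc_castSucc, Fin.snoc_castSucc]
                  exact hstep j
              · rw [Fin.snoc_last]
            · funext j
              exact Fin.snoc_castSucc _ _ _
      have hdisj : Disjoint (PathSet n (m-1)) (PathSet n (m+1)) := by
        rw [Set.disjoint_left]
        rintro q ⟨-, -, -, h1⟩ ⟨-, -, -, h2⟩
        omega
      calc (PathSet (n+1) m).ncard = (r '' PathSet (n+1) m).ncard :=
            (Set.ncard_image_of_injOn hinj).symm
        _ = (PathSet n (m-1) ∪ PathSet n (m+1)).ncard := by rw [himg]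
        _ = (PathSet n (m-1)).ncard + (PathSet n (m+1)).ncard :=
            Set.ncard_union_eq hdisj (pathSet_finite _ _) (pathSet_finite _ _)
        _ = pathCount n (m-1) + pathCount n (m+1) := by rw [ih, ih]
        _ = pathCount (n+1) m := by simp [pathCount, if_pos hm]
    · have hempty : PathSet (n+1) m = ∅ := by
        ext p
        simp only [Set.mem_empty_iff_false, iff_false]
        rintro ⟨-, hge, -, hlast⟩
        exact hm (hlast ▸ hge (Fin.last (n+1)))
      rw [hempty, Set.ncard_empty]
      simp [pathCount, hm]
lemma fin_app_congr {n : ℕ} (q : Fin (n+1) → ℤ) {a b : ℕ} (h : a = b) (ha : a < n+1)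
    (hb : b < n+1) : q ⟨a, ha⟩ = q ⟨b, hb⟩ := by cases h; rfl

def halfRestrict (d : ℕ) (hd : 1 ≤ d) (p : Fin (2*d-2+1) → ℤ) : Fin ((d-1)+1) → ℤ :=
  fun j => p ⟨j.val, by omega⟩

def symExtend (d : ℕ) (hd : 1 ≤ d) (q : Fin ((d-1)+1) → ℤ) : Fin (2*d-2+1) → ℤ :=
  fun i => q ⟨min i.val (2*d-2 - i.val), by omega⟩

set_option maxHeartbeats 2000000 in
/-- The number of symmetric lattice paths (`p_i = p_{g-i}`) of genus `g = 2d-2`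
with `p_{g/2} = m` equals `(m/d)·C(d, (d-m)/2)`, for `1 ≤ m ≤ d`,
`m ≡ d (mod 2)`. -/
theorem stmt_17 (d m : ℕ) (hd : 1 ≤ d) (hm1 : 1 ≤ m) (hmd : m ≤ d)
    (hpar : m % 2 = d % 2) :
    {p : Fin (2 * d - 2 + 1) → ℤ |
        IsLatticePath (2 * d - 2) p ∧ (∀ i, p i = p i.rev) ∧
          p ⟨d - 1, by omega⟩ = (m : ℤ)}.ncard * d
      = m * d.choose ((d - m) / 2) := by
  have key : {p : Fin (2 * d - 2 + 1) → ℤ |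
        IsLatticePath (2 * d - 2) p ∧ (∀ i, p i = p i.rev) ∧
          p ⟨d - 1, by omega⟩ = (m : ℤ)}.ncard = pathCount (d-1) (m:ℤ) := by
    have hinj : Set.InjOn (halfRestrict d hd) {p : Fin (2 * d - 2 + 1) → ℤ |
        IsLatticePath (2 * d - 2) p ∧ (∀ i, p i = p i.rev) ∧
          p ⟨d - 1, by omega⟩ = (m : ℤ)} := by
      intro p hp p' hp' h
      obtain ⟨-, hsym, -⟩ := hp
      obtain ⟨-, hsym', -⟩ := hp'
      have h' : ∀ (v : ℕ) (hv : v ≤ d - 1), p ⟨v, by omega⟩ = p' ⟨v, by omega⟩ := by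
        intro v hv
        exact congrFun h ⟨v, by omega⟩
      funext i
      have hi := i.isLt
      by_cases hiv : i.val ≤ d - 1
      · have e : i = ⟨i.val, by omega⟩ := Fin.ext rfl
        rw [e]
        exact h' i.val hiv
      · have hrv : i.rev.val = 2*d-2 - i.val := by rw [Fin.val_rev]; omega
        have hrge : i.rev.val ≤ d - 1 := by omega
        have e : i.rev = (⟨i.rev.val, by omega⟩ : Fin (2*d-2+1)) := Fin.ext rfl
        rw [hsym i, hsym' i, e]
        exact h' i.rev.val hrge
    have himg : (halfRestrict d hd) '' {p : Fin (2 * d - 2 + 1) → ℤ |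
        IsLatticePath (2 * d - 2) p ∧ (∀ i, p i = p i.rev) ∧
          p ⟨d - 1, by omega⟩ = (m : ℤ)} = PathSet (d-1) (m:ℤ) := by
      ext q
      constructor
      · rintro ⟨p, ⟨⟨h0, hlastp, hge, hstep⟩, hsym, hmid⟩, rfl⟩
        refine ⟨?_, fun j => hge _, ?_, ?_⟩
        · have e : halfRestrict d hd p 0 = p 0 := congrArg p (Fin.ext (by simp))
          rw [e, h0]
        · intro j
          have hj := j.isLt
          have e1 : halfRestrict d hd p j.succ = p ⟨j.val+1, by omega⟩ :=
            fin_app_congr p (show j.succ.val = j.val + 1 from rfl)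
              (by omega) (by omega)
          have e2 : halfRestrict d hd p j.castSucc = p ⟨j.val, by omega⟩ :=
            fin_app_congr p (show j.castSucc.val = j.val from rfl)
              (by omega) (by omega)
          show |halfRestrict d hd p j.succ - halfRestrict d hd p j.castSucc| = 1
          rw [e1, e2]
          exact hstep ⟨j.val, by omega⟩
        · have e : halfRestrict d hd p (Fin.last (d-1)) = p ⟨d-1, by omega⟩ :=
            fin_app_congr p (show (Fin.last (d-1)).val = d-1 from rfl)
              (by omega) (by omega)
          show halfRestrict d hd p (Fin.last (d-1)) = (m:ℤ)
          rw [e, hmid]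
      · rintro ⟨h0, hge, hstep, hlast⟩
        refine ⟨symExtend d hd q, ⟨⟨?_, ?_, fun i => hge _, ?_⟩, ?_, ?_⟩, ?_⟩
        · have e : symExtend d hd q 0 = q 0 := congrArg q (Fin.ext (by simp))
          rw [e, h0]
        · have e : symExtend d hd q (Fin.last (2*d-2)) = q 0 := by
            exact (fin_app_congr q
              (show min (2*d-2) (2*d-2 - (2*d-2)) = 0 by omega) (by omega) (by omega)).trans
              (congrArg q (Fin.ext (by simp)))
          show symExtend d hd q (Fin.last (2*d-2)) = 1
          rw [e, h0]
        · intro i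
          have hi := i.isLt
          show |symExtend d hd q i.succ - symExtend d hd q i.castSucc| = 1
          rcases le_or_gt i.val (d-2) with hc | hc
          · have e1 : symExtend d hd q i.succ = q ⟨i.val+1, by omega⟩ :=
              fin_app_congr q (show min (i.val+1) (2*d-2 - (i.val+1)) = i.val+1 by omega)
                (by omega) (by omega)
            have e2 : symExtend d hd q i.castSucc = q ⟨i.val, by omega⟩ :=
              fin_app_congr q (show min i.val (2*d-2 - i.val) = i.val by omega)
                (by omega) (by omega)
            rw [e1, e2]
            exact hstep ⟨i.val, by omega⟩
          · have e1 : symExtend d hd q i.succ = q ⟨2*d-3-i.val, by omega⟩ :=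
              fin_app_congr q (show min (i.val+1) (2*d-2 - (i.val+1)) = 2*d-3-i.val by omega)
                (by omega) (by omega)
            have e2 : symExtend d hd q i.castSucc = q ⟨(2*d-3-i.val)+1, by omega⟩ :=
              fin_app_congr q (show min i.val (2*d-2 - i.val) = (2*d-3-i.val)+1 by omega)
                (by omega) (by omega)
            rw [e1, e2, abs_sub_comm]
            exact hstep ⟨2*d-3-i.val, by omega⟩
        · intro i
          have hi := i.isLt
          have hrv : i.rev.val = 2*d-2 - i.val := by rw [Fin.val_rev]; omega
          show symExtend d hd q i = symExtend d hd q i.rev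
          exact fin_app_congr q (show min i.val (2*d-2 - i.val)
            = min i.rev.val (2*d-2 - i.rev.val) by rw [hrv]; omega) (by omega) (by omega)
        · show symExtend d hd q ⟨d-1, by omega⟩ = (m:ℤ)
          have e : symExtend d hd q ⟨d-1, by omega⟩ = q (Fin.last (d-1)) := by
            exact fin_app_congr q (show min (d-1) (2*d-2 - (d-1)) = d-1 by omega)
              (by omega) (by omega)
          rw [e, hlast]
        · funext j
          have hj := j.isLt
          show symExtend d hd q ⟨j.val, _⟩ = q j
          refine (fin_app_congr q (show min j.val (2*d-2 - j.val) = j.val by omega)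
            (by omega) (by omega)).trans ?_
          exact congrArg q (Fin.ext rfl)
    rw [← pathSet_ncard, ← himg, Set.ncard_image_of_injOn hinj]
  rw [key]
  clear key
  obtain ⟨k, hdk, hkk⟩ : ∃ k, d = m + 2*k ∧ (d-m)/2 = k := ⟨(d-m)/2, by omega, rfl⟩
  rw [hkk]
  rcases Nat.eq_zero_or_pos k with hk0 | hk1
  · have htop : pathCount (d-1) (m:ℤ) = 1 := by
      have := pathCount_top (d-1)
      rwa [show ((d-1:ℕ):ℤ)+1 = ((m:ℕ):ℤ) by push_cast [Nat.cast_sub hd]; omega] at this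
    rw [htop, hk0, Nat.choose_zero_right]
    omega
  · have hkey := pathCount_key (d-1) m k hm1 hk1 (by omega)
    have h1 : d * (d-1).choose (k-1) = d.choose k * k := by
      have := Nat.add_one_mul_choose_eq (d-1) (k-1)
      rwa [show d-1+1 = d by omega, show k-1+1 = k by omega] at this
    have h2 : d * (d-1).choose k = d.choose k * (d - k) := by
      have hsym : (d-1).choose ((d-1) - k) = (d-1).choose k := Nat.choose_symm (by omega)
      have h := Nat.add_one_mul_choose_eq (d-1) ((d-1)-k)
      rw [show d-1+1 = d by omega, show (d-1)-k+1 = d-k by omega, hsym] at h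
      rw [h, Nat.choose_symm (by omega : k ≤ d)]
    have h3 : pathCount (d-1) (m:ℤ) * d + d * (d-1).choose (k-1) = d * (d-1).choose k := by
      rw [← hkey]
      ring
    rw [h1, h2, show d - k = m + k by omega, Nat.mul_add, mul_comm (d.choose k) m] at h3
    omega
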